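/- For any wide triangular partition τ = (τ₁, ..., τ_k) with k ≥ 2, the set D(τ) = {τ_i − τ_{i+1} : 1 ≤ i ≤ k−1} of consecutive part differences equals {d} or {d, d+1} for some d ≥ 1, and the smallest part satisfies τ_k ≤ d + 1. -/

import Mathlib

/-- The line x/r + y/s = 1 is a cutting line for the partition with parts
`τ 1 ≥ ... ≥ τ k`: each part is given by the floor formula and the number of
parts matches. -/
def IsCuttingLine (r s : ℝ) (k : ℕ) (τ : ℕ → ℕ) : Prop :=
  0 < r ∧ 0 < s ∧
    (∀ j : ℕ, 1 ≤ j → j ≤ k → (τ j : ℤ) = ⌊r - (j : ℝ) * r / s⌋) ∧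
    (k : ℤ) = ⌊s - s / r⌋

/-- for a wide triangular partition with k ≥ 2 parts, the set of
consecutive part differences is {d} or {d, d+1} for some d ≥ 1, and the smallest
part is at most d + 1. -/
theorem stmt12 (k : ℕ) (τ : ℕ → ℕ) (hk : 2 ≤ k)
    (hwide : ∃ r s : ℝ, IsCuttingLine r s k τ ∧ s < r) :
    ∃ d : ℕ, 1 ≤ d ∧
      ({x : ℕ | ∃ i : ℕ, 1 ≤ i ∧ i + 1 ≤ k ∧ x = τ i - τ (i + 1)} = {d} ∨
        {x : ℕ | ∃ i : ℕ, 1 ≤ i ∧ i + 1 ≤ k ∧ x = τ i - τ (i + 1)} = {d, d + 1}) ∧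
      τ k ≤ d + 1 := by
  obtain ⟨r, s, ⟨hr, hs, hτ, hkfloor⟩, hsr⟩ := hwide
  set c : ℝ := r / s with hcdef
  have hc1 : 1 < c := (one_lt_div hs).2 hsr
  have hfc : 1 ≤ ⌊c⌋ := by
    rw [Int.le_floor]; exact_mod_cast hc1.le
  set m : ℕ := ⌊c⌋.toNat with hmdef
  have hmz : (m : ℤ) = ⌊c⌋ := Int.toNat_of_nonneg (by linarith)
  have hm1 : 1 ≤ m := by omega
  have hτ' : ∀ j : ℕ, 1 ≤ j → j ≤ k → (τ j : ℤ) = ⌊r - (j : ℝ) * c⌋ := by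
    intro j h1 h2
    rw [hτ j h1 h2, hcdef, mul_div_assoc]
  -- key bounds on differences
  have key : ∀ i : ℕ, 1 ≤ i → i + 1 ≤ k →
      ((m : ℤ) ≤ (τ i : ℤ) - τ (i + 1) ∧ (τ i : ℤ) - τ (i + 1) ≤ m + 1) := by
    intro i h1 h2
    have e1 : (τ i : ℤ) = ⌊r - (i : ℝ) * c⌋ := hτ' i h1 (by omega)
    have e2 : (τ (i + 1) : ℤ) = ⌊(r - (i : ℝ) * c) - c⌋ := by
      rw [hτ' (i + 1) (by omega) h2]
      congr 1
      push_cast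
      ring
    set x : ℝ := r - (i : ℝ) * c
    have hlow : ⌊x - c⌋ ≤ ⌊x⌋ - ⌊c⌋ := by
      have h : ⌊x - c⌋ ≤ ⌊x - (⌊c⌋ : ℝ)⌋ :=
        Int.floor_le_floor (by have := Int.floor_le c; linarith)
      rwa [Int.floor_sub_intCast] at h
    have hhigh : ⌊x⌋ - (⌊c⌋ + 1) ≤ ⌊x - c⌋ := by
      have h : ⌊x - ((⌊c⌋ : ℝ) + 1)⌋ ≤ ⌊x - c⌋ :=
        Int.floor_le_floor (by have := Int.lt_floor_add_one c; linarith)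
      have h2 : ⌊x - ((⌊c⌋ : ℝ) + 1)⌋ = ⌊x⌋ - (⌊c⌋ + 1) := by
        have : x - ((⌊c⌋ : ℝ) + 1) = x - ((⌊c⌋ + 1 : ℤ) : ℝ) := by push_cast; ring
        rw [this, Int.floor_sub_intCast]
      omega
    rw [e1, e2]
    omega
  -- each difference is m or m+1
  have hdiff : ∀ i : ℕ, 1 ≤ i → i + 1 ≤ k →
      τ i - τ (i + 1) = m ∨ τ i - τ (i + 1) = m + 1 := by
    intro i h1 h2
    have := key i h1 h2
    omega
  -- bound on the smallest part
  have hub : (s : ℝ) - s / r < (k : ℝ) + 1 := by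
    have h := Int.lt_floor_add_one (s - s / r)
    rw [← hkfloor] at h
    push_cast at h
    linarith
  have hrk : r - (k : ℝ) * c < 1 + c := by
    have hc0 : 0 < c := by linarith
    have h2 : (s - s / r) * c < ((k : ℝ) + 1) * c := by
      exact mul_lt_mul_of_pos_right hub hc0
    have h3 : (s - s / r) * c = r - 1 := by
      rw [hcdef]
      field_simp
    rw [h3] at h2
    nlinarith
  have hτk : τ k ≤ m + 1 := by
    have e : (τ k : ℤ) = ⌊r - (k : ℝ) * c⌋ := hτ' k (by omega) le_rfl
    have hflt : ⌊r - (k : ℝ) * c⌋ < ⌊c⌋ + 2 := by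
      rw [Int.floor_lt]
      have := Int.lt_floor_add_one c
      push_cast
      linarith
    omega
  set D : Set ℕ := {x : ℕ | ∃ i : ℕ, 1 ≤ i ∧ i + 1 ≤ k ∧ x = τ i - τ (i + 1)} with hD
  have hmem : ∀ x ∈ D, x = m ∨ x = m + 1 := by
    rintro x ⟨i, h1, h2, rfl⟩
    exact hdiff i h1 h2
  have hne : (τ 1 - τ 2) ∈ D := ⟨1, le_rfl, hk, rfl⟩
  by_cases hA : (m + 1) ∈ D
  · by_cases hB : m ∈ D
    · refine ⟨m, hm1, Or.inr ?_, hτk⟩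
      ext x
      simp only [Set.mem_insert_iff, Set.mem_singleton_iff]
      constructor
      · intro hx; exact hmem x hx
      · rintro (rfl | rfl)
        · exact hB
        · exact hA
    · refine ⟨m + 1, by omega, Or.inl ?_, by omega⟩
      ext x
      simp only [Set.mem_singleton_iff]
      constructor
      · intro hx
        rcases hmem x hx with rfl | rfl
        · exact absurd hx hB
        · rfl
      · rintro rfl; exact hA
  · refine ⟨m, hm1, Or.inl ?_, hτk⟩
    ext x
    simp only [Set.mem_singleton_iff]
    constructor
    · intro hx
      rcases hmem x hx with rfl | rfl
      · rfl
      · exact absurd hx hA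
    · rintro rfl
      rcases hmem _ hne with h | h
      · rwa [← h]
      · exact absurd (h ▸ hne) hA
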